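/- Let (P, L) be an antipodal plane of order s ≥ 3 that admits an embedding into PG(2,q) for some prime power q. Then there exist three points A₁, A₂, A₃ ∈ P such that each pair of them is incident with a common line of L, and such that for each i the antipodal point Aᵢ^⊥ (the unique point of P joined to Aᵢ by no line of L) is not incident with any of the three lines A₁A₂, A₁A₃, A₂A₃ of L. -/

import Mathlib

/-- An antipodal plane of order `s`: a partial linear space with
`s^2 + s + 2` points and lines, every line incident with exactly `s + 1` points and
every point incident with exactly `s + 1` lines. -/
structure IsAntipodalPlane {P L : Type*} (s : ℕ) (R : P → L → Prop) : Prop where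
  line_two_le : ∀ l : L, 2 ≤ {x | R x l}.ncard
  partial_linear : ∀ x y : P, x ≠ y → ∀ l m : L, R x l → R y l → R x m → R y m → l = m
  card_points : Nat.card P = s ^ 2 + s + 2
  card_lines : Nat.card L = s ^ 2 + s + 2
  line_card : ∀ l : L, {x | R x l}.ncard = s + 1
  point_card : ∀ x : P, {l | R x l}.ncard = s + 1

/-- Points of `PG(2,q)`: the 1-dimensional subspaces of `F_q ^ 3`. -/
def PGPoint (F : Type*) [Field F] : Type _ :=
  {W : Submodule F (Fin 3 → F) // Module.finrank F W = 1}

/-- Lines of `PG(2,q)`: the 2-dimensional subspaces of `F_q ^ 3`. -/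
def PGLine (F : Type*) [Field F] : Type _ :=
  {W : Submodule F (Fin 3 → F) // Module.finrank F W = 2}

/-- Incidence in `PG(2,q)`: containment of subspaces. -/
def PGIncidence (F : Type*) [Field F] : PGPoint F → PGLine F → Prop :=
  fun x l => x.1 ≤ l.1

/-- An embedding of the incidence structure `R` into the incidence structure `R'`:
injective maps on points and lines preserving incidence and non-incidence. -/
def HasEmbedding {P L P' L' : Type*} (R : P → L → Prop) (R' : P' → L' → Prop) : Prop :=
  ∃ (φ : P → P') (ψ : L → L'), Function.Injective φ ∧ Function.Injective ψ ∧
    ∀ (x : P) (l : L), R x l ↔ R' (φ x) (ψ l)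

/-- In an antipodal plane of order `s ≥ 3` embedded in `PG(2,q)`, there is a triangle
whose sides are lines of the plane and such that the antipodal points of its vertices
are not on its sides. -/
theorem exists_triangle_of_embedded_antipodal {P L : Type} (s : ℕ) (hs : 3 ≤ s)
    (R : P → L → Prop) (h : IsAntipodalPlane s R)
    (F : Type) [Field F] [Fintype F]
    (hemb : HasEmbedding R (PGIncidence F)) :
    ∃ (A₁ A₂ A₃ : P) (l₁₂ l₁₃ l₂₃ : L),
      A₁ ≠ A₂ ∧ A₁ ≠ A₃ ∧ A₂ ≠ A₃ ∧
      R A₁ l₁₂ ∧ R A₂ l₁₂ ∧ R A₁ l₁₃ ∧ R A₃ l₁₃ ∧ R A₂ l₂₃ ∧ R A₃ l₂₃ ∧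
      ∀ B : P,
        ((∀ l : L, ¬(R A₁ l ∧ R B l)) ∨ (∀ l : L, ¬(R A₂ l ∧ R B l)) ∨
          (∀ l : L, ¬(R A₃ l ∧ R B l))) →
        ¬ R B l₁₂ ∧ ¬ R B l₁₃ ∧ ¬ R B l₂₃ := by
  classical
  clear hemb
  have hsP : 0 < Nat.card P := by rw [h.card_points]; positivity
  have hsL : 0 < Nat.card L := by rw [h.card_lines]; positivity
  have hfinP : Finite P := (Nat.card_pos_iff.mp hsP).2
  have hfinL : Finite L := (Nat.card_pos_iff.mp hsL).2
  have hneP : Nonempty P := (Nat.card_pos_iff.mp hsP).1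
  letI : Fintype P := Fintype.ofFinite P
  letI : Fintype L := Fintype.ofFinite L
  have hcardP : Fintype.card P = s ^ 2 + s + 2 := by
    rw [← Nat.card_eq_fintype_card, h.card_points]
  have hcardL : Fintype.card L = s ^ 2 + s + 2 := by
    rw [← Nat.card_eq_fintype_card, h.card_lines]
  have hpc : ∀ l : L, (Finset.univ.filter (fun x => R x l)).card = s + 1 := by
    intro l
    have := h.line_card l
    rwa [Set.ncard_eq_toFinset_card', Set.toFinset_setOf] at this
  have hlc : ∀ x : P, (Finset.univ.filter (fun l => R x l)).card = s + 1 := by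
    intro x
    have := h.point_card x
    rwa [Set.ncard_eq_toFinset_card', Set.toFinset_setOf] at this
  -- unique antipode
  have key : ∀ A : P, ∃ B : P, (B ≠ A ∧ ∀ l, ¬(R A l ∧ R B l)) ∧
      ∀ C : P, (C ≠ A ∧ ∀ l, ¬(R A l ∧ R C l)) → C = B := by
    intro A
    set LA := Finset.univ.filter (fun l => R A l) with hLA
    set D := LA.biUnion (fun l => (Finset.univ.filter (fun x => R x l)).erase A) with hD
    have hDcard : D.card = (s + 1) * s := by
      rw [hD, Finset.card_biUnion]
      · have hterm : ∀ l ∈ LA, ((Finset.univ.filter (fun x => R x l)).erase A).card = s := by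
          intro l hl
          have hAl : R A l := (Finset.mem_filter.mp hl).2
          have hmemA : A ∈ Finset.univ.filter (fun x => R x l) :=
            Finset.mem_filter.mpr ⟨Finset.mem_univ _, hAl⟩
          rw [Finset.card_erase_of_mem hmemA, hpc l]
          omega
        rw [Finset.sum_congr rfl hterm, Finset.sum_const, hlc A, smul_eq_mul]
      · intro l hl m hm hlm
        rw [Function.onFun, Finset.disjoint_left]
        intro x hxl hxm
        obtain ⟨hxA, hxl'⟩ := Finset.mem_erase.mp hxl
        obtain ⟨-, hxm'⟩ := Finset.mem_erase.mp hxm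
        exact hlm (h.partial_linear A x (Ne.symm hxA) l m
          (Finset.mem_filter.mp hl).2 (Finset.mem_filter.mp hxl').2
          (Finset.mem_filter.mp hm).2 (Finset.mem_filter.mp hxm').2)
    have hAD : A ∉ D := by
      rw [hD]
      intro hA
      obtain ⟨l, -, hA'⟩ := Finset.mem_biUnion.mp hA
      exact (Finset.mem_erase.mp hA').1 rfl
    set NA := Finset.univ \ insert A D with hNA
    have hNAcard : NA.card = 1 := by
      rw [hNA, Finset.card_sdiff_of_subset (Finset.subset_univ _), Finset.card_univ, hcardP,
        Finset.card_insert_of_notMem hAD, hDcard]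
      have : (s + 1) * s = s ^ 2 + s := by ring
      omega
    obtain ⟨B, hB⟩ := Finset.card_eq_one.mp hNAcard
    have hmem : ∀ C : P, C ∈ NA ↔ (C ≠ A ∧ ∀ l, ¬(R A l ∧ R C l)) := by
      intro C
      constructor
      · intro hC
        obtain ⟨-, hC2⟩ := Finset.mem_sdiff.mp hC
        have hCA : C ≠ A := fun e => hC2 (by rw [e]; exact Finset.mem_insert_self _ _)
        refine ⟨hCA, fun l hl => hC2 ?_⟩
        exact Finset.mem_insert_of_mem (Finset.mem_biUnion.mpr
          ⟨l, Finset.mem_filter.mpr ⟨Finset.mem_univ _, hl.1⟩,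
            Finset.mem_erase.mpr ⟨hCA, Finset.mem_filter.mpr ⟨Finset.mem_univ _, hl.2⟩⟩⟩)
      · rintro ⟨hCA, hC⟩
        refine Finset.mem_sdiff.mpr ⟨Finset.mem_univ _, fun hmem' => ?_⟩
        rcases Finset.mem_insert.mp hmem' with he | hd
        · exact hCA he
        · obtain ⟨l, hl, hCl⟩ := Finset.mem_biUnion.mp hd
          exact hC l ⟨(Finset.mem_filter.mp hl).2,
            (Finset.mem_filter.mp (Finset.mem_erase.mp hCl).2).2⟩
    refine ⟨B, (hmem B).mp (hB ▸ Finset.mem_singleton_self B), fun C hC => ?_⟩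
    have hc' := (hmem C).mpr hC
    rw [hB] at hc'
    exact Finset.mem_singleton.mp hc'
  choose antip hantip huniq using key
  obtain ⟨A₁⟩ := hneP
  set B₁ := antip A₁ with hB₁def
  obtain ⟨hB₁ne, hB₁nc⟩ := hantip A₁
  have collinear_of : ∀ X : P, X ≠ A₁ → X ≠ B₁ → ∃ l, R A₁ l ∧ R X l := by
    intro X hX1 hXB
    by_contra hc
    push_neg at hc
    exact hXB (huniq A₁ X ⟨hX1, fun l hl => hc l hl.1 hl.2⟩)
  -- a line through neither A₁ nor B₁
  obtain ⟨l23, hnA1l23, hnB1l23⟩ : ∃ l23 : L, ¬R A₁ l23 ∧ ¬R B₁ l23 := by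
    have hucard := Finset.card_union_le (Finset.univ.filter (fun l => R A₁ l))
      (Finset.univ.filter (fun l => R B₁ l))
    rw [hlc A₁, hlc B₁] at hucard
    have hne : (Finset.univ \ (Finset.univ.filter (fun l => R A₁ l) ∪
        Finset.univ.filter (fun l => R B₁ l))).Nonempty := by
      rw [← Finset.card_pos, Finset.card_sdiff_of_subset (Finset.subset_univ _), Finset.card_univ, hcardL]
      have hss : 3 * s ≤ s * s := Nat.mul_le_mul_right s hs
      have hsq : s ^ 2 = s * s := by ring
      omega
    obtain ⟨l, hl⟩ := hne
    have hl' := (Finset.mem_sdiff.mp hl).2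
    rw [Finset.mem_union, not_or] at hl'
    refine ⟨l, fun ha => hl'.1 ?_, fun hb => hl'.2 ?_⟩
    · exact Finset.mem_filter.mpr ⟨Finset.mem_univ _, ha⟩
    · exact Finset.mem_filter.mpr ⟨Finset.mem_univ _, hb⟩
  set pts := Finset.univ.filter (fun x => R x l23) with hpts
  have hptscard : pts.card = s + 1 := hpc l23
  have hmempts : ∀ X : P, X ∈ pts ↔ R X l23 := by
    intro X
    rw [hpts, Finset.mem_filter]
    exact ⟨fun h => h.2, fun h => ⟨Finset.mem_univ _, h⟩⟩
  -- at most one bad partner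
  have bad_unique : ∀ X ∈ pts, ∀ Y ∈ pts, ∀ Y' ∈ pts,
      (∃ l, R A₁ l ∧ R Y l ∧ R (antip X) l) → (∃ l, R A₁ l ∧ R Y' l ∧ R (antip X) l) →
      Y = Y' := by
    intro X hX Y hY Y' hY' ⟨l, hl1, hl2, hl3⟩ ⟨l', hl1', hl2', hl3'⟩
    have hantipXne : antip X ≠ A₁ := by
      intro e
      obtain ⟨he1, he2⟩ := hantip X
      rw [e] at he1 he2
      have : X = B₁ := huniq A₁ X ⟨fun e' => he1 e'.symm, fun m hm => he2 m ⟨hm.2, hm.1⟩⟩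
      exact hnB1l23 (this ▸ (hmempts X).mp hX)
    have hll' : l = l' := h.partial_linear A₁ (antip X) (Ne.symm hantipXne) l l' hl1 hl3 hl1' hl3'
    subst hll'
    by_contra hYY'
    have : l23 = l := h.partial_linear Y Y' hYY' l23 l ((hmempts Y).mp hY)
      ((hmempts Y').mp hY') hl2 hl2'
    exact hnA1l23 (this ▸ hl1)
  -- counting pairs
  set pp := pts ×ˢ pts with hpp
  set SD := pp.filter (fun p : P × P => p.1 = p.2 ∨
      (∃ l, R A₁ l ∧ R p.2 l ∧ R (antip p.1) l) ∨
      (∃ l, R A₁ l ∧ R p.1 l ∧ R (antip p.2) l)) with hSD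
  have hSDcard : SD.card ≤ 3 * (s + 1) := by
    have h1 : (pp.filter (fun p : P × P => p.1 = p.2)).card ≤ s + 1 := by
      rw [← hptscard]
      refine Finset.card_le_card_of_injOn Prod.fst
        (fun p hp => (Finset.mem_product.mp (Finset.mem_filter.mp hp).1).1) ?_
      intro p hp q hq e
      have hp2 := (Finset.mem_filter.mp hp).2
      have hq2 := (Finset.mem_filter.mp hq).2
      exact Prod.ext e (by rw [← hp2, ← hq2, e])
    have h2 : (pp.filter (fun p : P × P => ∃ l, R A₁ l ∧ R p.2 l ∧ R (antip p.1) l)).card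
        ≤ s + 1 := by
      rw [← hptscard]
      refine Finset.card_le_card_of_injOn Prod.fst
        (fun p hp => (Finset.mem_product.mp (Finset.mem_filter.mp hp).1).1) ?_
      intro p hp q hq e
      have hpm := Finset.mem_product.mp (Finset.mem_filter.mp hp).1
      have hqm := Finset.mem_product.mp (Finset.mem_filter.mp hq).1
      have hpb := (Finset.mem_filter.mp hp).2
      have hqb := (Finset.mem_filter.mp hq).2
      rw [e] at hpb
      exact Prod.ext e (bad_unique q.1 hqm.1 p.2 hpm.2 q.2 hqm.2 hpb hqb)
    have h3 : (pp.filter (fun p : P × P => ∃ l, R A₁ l ∧ R p.1 l ∧ R (antip p.2) l)).card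
        ≤ s + 1 := by
      rw [← hptscard]
      refine Finset.card_le_card_of_injOn Prod.snd
        (fun p hp => (Finset.mem_product.mp (Finset.mem_filter.mp hp).1).2) ?_
      intro p hp q hq e
      have hpm := Finset.mem_product.mp (Finset.mem_filter.mp hp).1
      have hqm := Finset.mem_product.mp (Finset.mem_filter.mp hq).1
      have hpb := (Finset.mem_filter.mp hp).2
      have hqb := (Finset.mem_filter.mp hq).2
      rw [e] at hpb
      exact Prod.ext (bad_unique q.2 hqm.2 p.1 hpm.1 q.1 hqm.1 hpb hqb) e
    calc SD.card ≤ (pp.filter (fun p : P × P => p.1 = p.2)).card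
          + (pp.filter (fun p : P × P => (∃ l, R A₁ l ∧ R p.2 l ∧ R (antip p.1) l) ∨
              (∃ l, R A₁ l ∧ R p.1 l ∧ R (antip p.2) l))).card := by
          rw [hSD, Finset.filter_or]
          exact Finset.card_union_le _ _
      _ ≤ (pp.filter (fun p : P × P => p.1 = p.2)).card
          + ((pp.filter (fun p : P × P => ∃ l, R A₁ l ∧ R p.2 l ∧ R (antip p.1) l)).card
            + (pp.filter (fun p : P × P => ∃ l, R A₁ l ∧ R p.1 l ∧ R (antip p.2) l)).card) := by
          rw [Finset.filter_or]
          exact Nat.add_le_add_left (Finset.card_union_le _ _) _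
      _ ≤ 3 * (s + 1) := by omega
  have hppcard : pp.card = (s + 1) * (s + 1) := by
    rw [hpp, Finset.card_product, hptscard]
  have hlt : SD.card < pp.card :=
    lt_of_le_of_lt hSDcard (by rw [hppcard]; nlinarith)
  have hsub : SD ⊆ pp := by rw [hSD]; exact Finset.filter_subset _ _
  have hne2 : (pp \ SD).Nonempty := by
    rw [← Finset.card_pos, Finset.card_sdiff_of_subset hsub]
    omega
  obtain ⟨p, hpmem⟩ := hne2
  obtain ⟨hppp, hpSD⟩ := Finset.mem_sdiff.mp hpmem
  have hcond : ¬(p.1 = p.2 ∨ (∃ l, R A₁ l ∧ R p.2 l ∧ R (antip p.1) l) ∨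
      (∃ l, R A₁ l ∧ R p.1 l ∧ R (antip p.2) l)) :=
    fun hc => hpSD (Finset.mem_filter.mpr ⟨hppp, hc⟩)
  have hne12 : p.1 ≠ p.2 := fun e => hcond (Or.inl e)
  have hnb1 : ¬∃ l, R A₁ l ∧ R p.2 l ∧ R (antip p.1) l :=
    fun hx => hcond (Or.inr (Or.inl hx))
  have hnb2 : ¬∃ l, R A₁ l ∧ R p.1 l ∧ R (antip p.2) l :=
    fun hx => hcond (Or.inr (Or.inr hx))
  obtain ⟨hp1, hp2⟩ := Finset.mem_product.mp hppp
  set A₂ := p.1 with hA₂def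
  set A₃ := p.2 with hA₃def
  have hA2l23 : R A₂ l23 := (hmempts _).mp hp1
  have hA3l23 : R A₃ l23 := (hmempts _).mp hp2
  have hA2ne1 : A₂ ≠ A₁ := fun e => hnA1l23 (e ▸ hA2l23)
  have hA3ne1 : A₃ ≠ A₁ := fun e => hnA1l23 (e ▸ hA3l23)
  have hA2neB : A₂ ≠ B₁ := fun e => hnB1l23 (e ▸ hA2l23)
  have hA3neB : A₃ ≠ B₁ := fun e => hnB1l23 (e ▸ hA3l23)
  obtain ⟨l12, h112, h212⟩ := collinear_of A₂ hA2ne1 hA2neB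
  obtain ⟨l13, h113, h313⟩ := collinear_of A₃ hA3ne1 hA3neB
  refine ⟨A₁, A₂, A₃, l12, l13, l23, Ne.symm hA2ne1, Ne.symm hA3ne1, hne12,
    h112, h212, h113, h313, hA2l23, hA3l23, ?_⟩
  intro B hB
  rcases hB with h1 | h2 | h3
  · have hBA1 : B ≠ A₁ := fun e => h1 l12 ⟨h112, by rw [e]; exact h112⟩
    have hBB1 : B = B₁ := huniq A₁ B ⟨hBA1, h1⟩
    exact ⟨fun hb => h1 l12 ⟨h112, hb⟩, fun hb => h1 l13 ⟨h113, hb⟩,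
      by rw [hBB1]; exact hnB1l23⟩
  · have hBA2 : B ≠ A₂ := fun e => h2 l23 ⟨hA2l23, by rw [e]; exact hA2l23⟩
    have hBB : B = antip A₂ := huniq A₂ B ⟨hBA2, h2⟩
    refine ⟨fun hb => h2 l12 ⟨h212, hb⟩, fun hb => ?_, fun hb => h2 l23 ⟨hA2l23, hb⟩⟩
    exact hnb1 ⟨l13, h113, h313, by rw [← hBB]; exact hb⟩
  · have hBA3 : B ≠ A₃ := fun e => h3 l23 ⟨hA3l23, by rw [e]; exact hA3l23⟩
    have hBB : B = antip A₃ := huniq A₃ B ⟨hBA3, h3⟩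
    refine ⟨fun hb => ?_, fun hb => h3 l13 ⟨h313, hb⟩, fun hb => h3 l23 ⟨hA3l23, hb⟩⟩
    exact hnb2 ⟨l12, h112, h212, by rw [← hBB]; exact hb⟩
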